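/- For k = 4, define D_min(w₁) = w₁·ln(6·p₁₁(w₁)) + (1-w₁)·ln(6·p₀₀(w₁)), where w₂(w₁) = (2 - √D)/3, D = 12(w₁ - 1/2)² + 1, p₁₁ = w₁ - w₂, p₀₀ = 1 - w₁ - w₂. Then the second derivative of D_min is at least 12 on (0,1), i.e. D_min''(w₁) ≥ 12. -/

import Mathlib

noncomputable def w2fun (w₁ : ℝ) : ℝ := (2 - Real.sqrt (12 * (w₁ - 1 / 2) ^ 2 + 1)) / 3

noncomputable def Dmin (w₁ : ℝ) : ℝ :=
  w₁ * Real.log (6 * (w₁ - w2fun w₁)) + (1 - w₁) * Real.log (6 * (1 - w₁ - w2fun w₁))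

noncomputable def Rf (x : ℝ) : ℝ := Real.sqrt (12 * (x - 1 / 2) ^ 2 + 1)

noncomputable def Fd (x : ℝ) : ℝ :=
  Real.log (6 * (x - w2fun x)) - Real.log (6 * (1 - x - w2fun x))
  + x * (1 + 4 * (x - 1 / 2) / Rf x) / (x - w2fun x)
  + (1 - x) * (4 * (x - 1 / 2) / Rf x - 1) / (1 - x - w2fun x)

noncomputable def Gd (x : ℝ) : ℝ :=
  2 * (1 + 4 * (x - 1 / 2) / Rf x) / (x - w2fun x)
  + 2 * (1 - 4 * (x - 1 / 2) / Rf x) / (1 - x - w2fun x)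
  + 4 * x / ((Rf x) ^ 3 * (x - w2fun x))
  + 4 * (1 - x) / ((Rf x) ^ 3 * (1 - x - w2fun x))
  - x * (1 + 4 * (x - 1 / 2) / Rf x) ^ 2 / (x - w2fun x) ^ 2
  - (1 - x) * (1 - 4 * (x - 1 / 2) / Rf x) ^ 2 / (1 - x - w2fun x) ^ 2

lemma facts (x : ℝ) (hx : x ∈ Set.Ioo (0 : ℝ) 1) :
    (Rf x) ^ 2 = 12 * (x - 1 / 2) ^ 2 + 1 ∧ 0 < Rf x ∧
    0 < x - w2fun x ∧ 0 < 1 - x - w2fun x := by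
  obtain ⟨h0, h1⟩ := hx
  have hD : (0 : ℝ) ≤ 12 * (x - 1 / 2) ^ 2 + 1 := by positivity
  have hr2 : (Rf x) ^ 2 = 12 * (x - 1 / 2) ^ 2 + 1 := Real.sq_sqrt hD
  have hrpos : 0 < Rf x := Real.sqrt_pos.mpr (by positivity)
  have hw2 : w2fun x = (2 - Rf x) / 3 := rfl
  refine ⟨hr2, hrpos, ?_, ?_⟩
  · rw [hw2]
    nlinarith [hr2, hrpos, mul_pos h0 h0, sq_nonneg (Rf x - (2 - 3 * x))]
  · rw [hw2]
    nlinarith [hr2, hrpos, mul_pos (sub_pos.mpr h1) (sub_pos.mpr h1),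
      sq_nonneg (Rf x - (3 * x - 1))]

lemma basic_derivs (x : ℝ) (hx : x ∈ Set.Ioo (0 : ℝ) 1) :
    HasDerivAt Rf (12 * (x - 1 / 2) / Rf x) x ∧
    HasDerivAt w2fun (-(4 * (x - 1 / 2) / Rf x)) x ∧
    HasDerivAt (fun y => 4 * (y - 1 / 2) / Rf y) (4 / (Rf x) ^ 3) x := by
  obtain ⟨hr2, hrpos, ha, hb⟩ := facts x hx
  have hrne : Rf x ≠ 0 := ne_of_gt hrpos
  have hq : HasDerivAt (fun y : ℝ => 12 * (y - 1 / 2) ^ 2 + 1) (24 * (x - 1 / 2)) x := by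
    have h := ((((hasDerivAt_id x).sub_const (1 / 2)).pow 2).const_mul 12).add_const 1
    refine h.congr_deriv ?_; symm
    try simp only [id_eq]
    push_cast
    ring
  have hRf : HasDerivAt Rf (12 * (x - 1 / 2) / Rf x) x := by
    have h := hq.sqrt (by positivity)
    refine h.congr_deriv ?_; symm
    show 12 * (x - 1 / 2) / Rf x = 24 * (x - 1 / 2) / (2 * Rf x)
    field_simp
    ring
  have hw2 : HasDerivAt w2fun (-(4 * (x - 1 / 2) / Rf x)) x := by
    have h := (hRf.const_sub 2).div_const 3
    refine h.congr_deriv ?_; symm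
    ring
  have hu : HasDerivAt (fun y => 4 * (y - 1 / 2) / Rf y) (4 / (Rf x) ^ 3) x := by
    have hnum : HasDerivAt (fun y : ℝ => 4 * (y - 1 / 2)) 4 x := by
      have h := ((hasDerivAt_id x).sub_const (1 / 2)).const_mul 4
      refine h.congr_deriv ?_; symm
      try simp only [id_eq]
      ring
    have h := hnum.div hRf hrne
    refine h.congr_deriv ?_; symm
    field_simp
    linear_combination (-4) * hr2
  exact ⟨hRf, hw2, hu⟩

set_option maxHeartbeats 1000000 in
lemma hasDeriv_Dmin (x : ℝ) (hx : x ∈ Set.Ioo (0 : ℝ) 1) : HasDerivAt Dmin (Fd x) x := by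
  obtain ⟨hr2, hrpos, ha, hb⟩ := facts x hx
  obtain ⟨hRf, hw2, hu⟩ := basic_derivs x hx
  have hrne : Rf x ≠ 0 := ne_of_gt hrpos
  have hane : x - w2fun x ≠ 0 := ne_of_gt ha
  have hbne : 1 - x - w2fun x ≠ 0 := ne_of_gt hb
  have hp1 : HasDerivAt (fun y => y - w2fun y) (1 + 4 * (x - 1 / 2) / Rf x) x := by
    have h := (hasDerivAt_id x).sub hw2
    refine h.congr_deriv ?_; symm
    try simp only [id_eq]
    ring
  have hp0 : HasDerivAt (fun y => 1 - y - w2fun y) (4 * (x - 1 / 2) / Rf x - 1) x := by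
    have h := ((hasDerivAt_const x (1 : ℝ)).sub (hasDerivAt_id x)).sub hw2
    refine h.congr_deriv ?_; symm
    ring
  have hlog1 : HasDerivAt (fun y => Real.log (6 * (y - w2fun y)))
      ((1 + 4 * (x - 1 / 2) / Rf x) / (x - w2fun x)) x := by
    have h := (hp1.const_mul 6).log (by positivity)
    refine h.congr_deriv ?_; symm
    field_simp
  have hlog2 : HasDerivAt (fun y => Real.log (6 * (1 - y - w2fun y)))
      ((4 * (x - 1 / 2) / Rf x - 1) / (1 - x - w2fun x)) x := by
    have h := (hp0.const_mul 6).log (by positivity)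
    refine h.congr_deriv ?_; symm
    field_simp
  have hA : HasDerivAt (fun y => y * Real.log (6 * (y - w2fun y)))
      (Real.log (6 * (x - w2fun x)) + x * ((1 + 4 * (x - 1 / 2) / Rf x) / (x - w2fun x))) x := by
    have h := (hasDerivAt_id x).mul hlog1
    refine h.congr_deriv ?_; symm
    try simp only [id_eq]
    ring
  have hB : HasDerivAt (fun y => (1 - y) * Real.log (6 * (1 - y - w2fun y)))
      (-Real.log (6 * (1 - x - w2fun x)) +
        (1 - x) * ((4 * (x - 1 / 2) / Rf x - 1) / (1 - x - w2fun x))) x := by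
    have h := (((hasDerivAt_const x (1 : ℝ)).sub (hasDerivAt_id x))).mul hlog2
    refine h.congr_deriv ?_; symm
    simp only [Pi.sub_apply, Pi.add_apply, id_eq]
    ring
  have h := hA.add hB
  have heq : Dmin = fun y => y * Real.log (6 * (y - w2fun y)) +
      (1 - y) * Real.log (6 * (1 - y - w2fun y)) := rfl
  rw [heq]
  refine h.congr_deriv ?_; symm
  unfold Fd
  field_simp
  ring

set_option maxHeartbeats 2000000 in
lemma hasDeriv_Fd (x : ℝ) (hx : x ∈ Set.Ioo (0 : ℝ) 1) : HasDerivAt Fd (Gd x) x := by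
  obtain ⟨hr2, hrpos, ha, hb⟩ := facts x hx
  obtain ⟨hRf, hw2, hu⟩ := basic_derivs x hx
  have hrne : Rf x ≠ 0 := ne_of_gt hrpos
  have hane : x - w2fun x ≠ 0 := ne_of_gt ha
  have hbne : 1 - x - w2fun x ≠ 0 := ne_of_gt hb
  have hp1 : HasDerivAt (fun y => y - w2fun y) (1 + 4 * (x - 1 / 2) / Rf x) x := by
    have h := (hasDerivAt_id x).sub hw2
    refine h.congr_deriv ?_; symm
    try simp only [id_eq]
    ring
  have hp0 : HasDerivAt (fun y => 1 - y - w2fun y) (4 * (x - 1 / 2) / Rf x - 1) x := by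
    have h := ((hasDerivAt_const x (1 : ℝ)).sub (hasDerivAt_id x)).sub hw2
    refine h.congr_deriv ?_; symm
    ring
  have hlog1 : HasDerivAt (fun y => Real.log (6 * (y - w2fun y)))
      ((1 + 4 * (x - 1 / 2) / Rf x) / (x - w2fun x)) x := by
    have h := (hp1.const_mul 6).log (by positivity)
    refine h.congr_deriv ?_; symm
    field_simp
  have hlog2 : HasDerivAt (fun y => Real.log (6 * (1 - y - w2fun y)))
      ((4 * (x - 1 / 2) / Rf x - 1) / (1 - x - w2fun x)) x := by
    have h := (hp0.const_mul 6).log (by positivity)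
    refine h.congr_deriv ?_; symm
    field_simp
  have hnum3 : HasDerivAt (fun y => y * (1 + 4 * (y - 1 / 2) / Rf y))
      ((1 + 4 * (x - 1 / 2) / Rf x) + x * (4 / (Rf x) ^ 3)) x := by
    have h := (hasDerivAt_id x).mul ((hasDerivAt_const x (1 : ℝ)).add hu)
    refine h.congr_deriv ?_; symm
    simp only [Pi.sub_apply, Pi.add_apply, id_eq]
    ring
  have hT3 := hnum3.div hp1 hane
  have hnum4 : HasDerivAt (fun y => (1 - y) * (4 * (y - 1 / 2) / Rf y - 1))
      (-(4 * (x - 1 / 2) / Rf x - 1) + (1 - x) * (4 / (Rf x) ^ 3)) x := by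
    have h := ((hasDerivAt_const x (1 : ℝ)).sub (hasDerivAt_id x)).mul (hu.sub_const 1)
    refine h.congr_deriv ?_; symm
    simp only [Pi.sub_apply, Pi.add_apply, id_eq]
    ring
  have hT4 := hnum4.div hp0 hbne
  have h := ((hlog1.sub hlog2).add hT3).add hT4
  have heq : Fd = fun y => (Real.log (6 * (y - w2fun y)) - Real.log (6 * (1 - y - w2fun y)))
      + y * (1 + 4 * (y - 1 / 2) / Rf y) / (y - w2fun y)
      + (1 - y) * (4 * (y - 1 / 2) / Rf y - 1) / (1 - y - w2fun y) := by
    funext y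
    unfold Fd
    ring
  rw [heq]
  refine h.congr_deriv ?_; symm
  unfold Gd
  field_simp
  ring

noncomputable def Apoly (s : ℝ) : ℝ := 1 / 2 + 12 * s ^ 2 + 248 / 3 * s ^ 4 + 128 * s ^ 6

noncomputable def Bpoly (s : ℝ) : ℝ := 1 / 2 + 9 * s ^ 2 + 112 / 3 * s ^ 4 + 16 * s ^ 6

noncomputable def cpoly (s r : ℝ) : ℝ :=
  14 / 27 - 11 / 18 * r + 20 / 27 * r ^ 2 - 19 / 27 * r ^ 3 + 4 / 9 * r ^ 4
    - 4 / 27 * r ^ 5 + s ^ 2 * (16 / 3 - 7 / 9 * r - 8 / 9 * r ^ 2 + 8 / 9 * r ^ 3)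
    + s ^ 4 * (32 / 3 - 4 / 3 * r)

set_option maxHeartbeats 2000000 in
lemma key_eq (x : ℝ) (hx : x ∈ Set.Ioo (0 : ℝ) 1) :
    Gd x - 12 =
      (Apoly (x - 1 / 2) - Bpoly (x - 1 / 2) * Rf x
        + cpoly (x - 1 / 2) (Rf x) * ((Rf x) ^ 2 - (12 * (x - 1 / 2) ^ 2 + 1))) /
      ((Rf x) ^ 3 * (x - w2fun x) ^ 2 * (1 - x - w2fun x) ^ 2) := by
  obtain ⟨hr2, hrpos, ha, hb⟩ := facts x hx
  have hrne : Rf x ≠ 0 := ne_of_gt hrpos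
  have hw2eq : w2fun x = (2 - Rf x) / 3 := rfl
  have hane : x - (2 - Rf x) / 3 ≠ 0 := by rw [← hw2eq]; exact ne_of_gt ha
  have hbne : 1 - x - (2 - Rf x) / 3 ≠ 0 := by rw [← hw2eq]; exact ne_of_gt hb
  have hane3 : 3 * x - 2 + Rf x ≠ 0 := by
    have h := ha; rw [hw2eq] at h
    have : 0 < 3 * x - 2 + Rf x := by linarith
    exact ne_of_gt this
  have hbne3 : 1 - 3 * x + Rf x ≠ 0 := by
    have h := hb; rw [hw2eq] at h
    have : 0 < 1 - 3 * x + Rf x := by linarith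
    exact ne_of_gt this
  unfold Gd Apoly Bpoly cpoly
  rw [hw2eq]
  have e1 : x - (2 - Rf x) / 3 = (3 * x - 2 + Rf x) / 3 := by ring
  have e2 : 1 - x - (2 - Rf x) / 3 = (1 - 3 * x + Rf x) / 3 := by ring
  rw [e1, e2]
  have hane3' : x * 3 - 2 + Rf x ≠ 0 := by rw [mul_comm]; exact hane3
  have hbne3' : 1 - x * 3 + Rf x ≠ 0 := by rw [mul_comm]; exact hbne3
  field_simp
  ring

theorem stmt_8 (w₁ : ℝ) (hw : w₁ ∈ Set.Ioo (0 : ℝ) 1) :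
    12 ≤ deriv (deriv Dmin) w₁ := by
  obtain ⟨hr2, hrpos, ha, hb⟩ := facts w₁ hw
  have hev : deriv Dmin =ᶠ[nhds w₁] Fd := by
    filter_upwards [Ioo_mem_nhds hw.1 hw.2] with x hx using (hasDeriv_Dmin x hx).deriv
  have hdd : deriv (deriv Dmin) w₁ = Gd w₁ := by
    rw [hev.deriv_eq, (hasDeriv_Fd w₁ hw).deriv]
  rw [hdd]
  have key := key_eq w₁ hw
  rw [hr2, sub_self, mul_zero, add_zero] at key
  have hs2 : (w₁ - 1 / 2) ^ 2 ≤ 1 / 4 := by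
    obtain ⟨h0, h1⟩ := hw
    nlinarith
  have hprod : 0 ≤ (Apoly (w₁ - 1 / 2) - Bpoly (w₁ - 1 / 2) * Rf w₁) *
      (Apoly (w₁ - 1 / 2) + Bpoly (w₁ - 1 / 2) * Rf w₁) := by
    have hid : (Apoly (w₁ - 1 / 2) - Bpoly (w₁ - 1 / 2) * Rf w₁) *
        (Apoly (w₁ - 1 / 2) + Bpoly (w₁ - 1 / 2) * Rf w₁) =
        (w₁ - 1 / 2) ^ 4 * (1 - 4 * (w₁ - 1 / 2) ^ 2) ^ 3 *
          (12 * (w₁ - 1 / 2) ^ 2 + 1) ^ 2 / 3 := by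
      unfold Apoly Bpoly
      linear_combination
        (-(1 / 2 + 9 * (w₁ - 1 / 2) ^ 2 + 112 / 3 * (w₁ - 1 / 2) ^ 4 + 16 * (w₁ - 1 / 2) ^ 6) ^ 2)
          * hr2
    rw [hid]
    have h4 : 0 ≤ 1 - 4 * (w₁ - 1 / 2) ^ 2 := by linarith
    positivity
  have hsum : 0 < Apoly (w₁ - 1 / 2) + Bpoly (w₁ - 1 / 2) * Rf w₁ := by
    have hA0 : 0 < Apoly (w₁ - 1 / 2) := by unfold Apoly; positivity
    have hB0 : 0 < Bpoly (w₁ - 1 / 2) := by unfold Bpoly; positivity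
    nlinarith
  have hAB : 0 ≤ Apoly (w₁ - 1 / 2) - Bpoly (w₁ - 1 / 2) * Rf w₁ := by
    nlinarith [hprod, hsum]
  have hden : 0 < (Rf w₁) ^ 3 * (w₁ - w2fun w₁) ^ 2 * (1 - w₁ - w2fun w₁) ^ 2 := by
    have h1 : (0:ℝ) < (w₁ - w2fun w₁) ^ 2 := by positivity
    have h2 : (0:ℝ) < (1 - w₁ - w2fun w₁) ^ 2 := by positivity
    positivity
  nlinarith [div_nonneg hAB hden.le, key]
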